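/- arXiv:2405.20547 — 3 statements merged into one kernel-verified Lean document; each statement's English description precedes it below -/
import Mathlib

section
/- Let $\mathcal{F}$ be a family of subsets of an $n$-element set such that $\pi_{\mathcal{F}}(z) \leq c z^d$ for all $z$, and suppose $\mathcal{F}$ is $\delta$-separated, i.e., $|A \triangle B| \geq \delta$ for all distinct $A, B \in \mathcal{F}$. Then $|\mathcal{F}| \leq c_1 (n/\delta)^d$ for a constant $c_1$ depending only on $c$ and $d$. -/
open Finset

namespace HP
variable {α : Type*} [DecidableEq α]

/-- ordered "unit distance" pairs -/
def eP (T : Finset (Finset α)) : Finset (Finset α × Finset α) :=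
  (T ×ˢ T).filter fun p => (symmDiff p.1 p.2).card = 1

lemma mem_eP {T : Finset (Finset α)} {p : Finset α × Finset α} :
    p ∈ eP T ↔ p.1 ∈ T ∧ p.2 ∈ T ∧ (symmDiff p.1 p.2).card = 1 := by
  simp [eP, mem_filter, mem_product, and_assoc]

lemma symmDiff_erase (a b : Finset α) (x : α) :
    symmDiff (a.erase x) (b.erase x) = (symmDiff a b).erase x := by
  ext y; simp [Finset.mem_symmDiff, Finset.mem_erase]; tauto

lemma pair_struct {a b : Finset α} {x : α} (h : symmDiff a b = {x}) :
    (x ∉ a ∧ b = insert x a) ∨ (x ∉ b ∧ a = insert x b) := by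
  have hx : x ∈ symmDiff a b := by rw [h]; exact mem_singleton_self x
  have key : ∀ y, y ≠ x → (y ∈ a ↔ y ∈ b) := by
    intro y hy
    have : y ∉ symmDiff a b := by rw [h]; simp [hy]
    rw [Finset.mem_symmDiff] at this; tauto
  rw [Finset.mem_symmDiff] at hx
  rcases hx with ⟨ha, hb⟩ | ⟨hb, ha⟩
  · right
    refine ⟨hb, ?_⟩
    ext y
    rcases eq_or_ne y x with rfl | hy
    · simp [ha]
    · simp [Finset.mem_insert, hy, key y hy]
  · left
    refine ⟨ha, ?_⟩
    ext y
    rcases eq_or_ne y x with rfl | hy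
    · simp [hb]
    · simp [Finset.mem_insert, hy, (key y hy).symm]

theorem hauUD : ∀ (k : ℕ) (d₀ : ℕ) (U : Finset α) (T : Finset (Finset α)), U.card ≤ k →
    (∀ t ∈ T, t ⊆ U) →
    (∀ B : Finset α, (∀ C ⊆ B, ∃ t ∈ T, t ∩ B = C) → B.card ≤ d₀) →
    (eP T).card ≤ 2 * d₀ * T.card := by
  intro k
  induction k with
  | zero =>
    intro d₀ U T hU hTU _
    have hU0 : U = ∅ := card_eq_zero.mp (Nat.le_zero.mp hU)
    have : eP T = ∅ := by
      apply eq_empty_of_forall_notMem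
      intro p hp
      rw [mem_eP] at hp
      have h1 : p.1 = ∅ := subset_empty.mp (hU0 ▸ hTU p.1 hp.1)
      have h2 : p.2 = ∅ := subset_empty.mp (hU0 ▸ hTU p.2 hp.2.1)
      have := hp.2.2
      rw [h1, h2] at this
      simp at this
    simp [this]
  | succ k ih =>
    intro d₀ U T hU hTU hsh
    rcases U.eq_empty_or_nonempty with rfl | ⟨x, hx⟩
    · -- same as base
      have : eP T = ∅ := by
        apply eq_empty_of_forall_notMem
        intro p hp
        rw [mem_eP] at hp
        have h1 : p.1 = ∅ := subset_empty.mp (hTU p.1 hp.1)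
        have h2 : p.2 = ∅ := subset_empty.mp (hTU p.2 hp.2.1)
        have := hp.2.2
        rw [h1, h2] at this
        simp at this
      simp [this]
    · set U' := U.erase x with hU'def
      set T' := T.image (fun t => t.erase x) with hT'def
      set W := T.filter (fun t => x ∉ t ∧ insert x t ∈ T) with hWdef
      -- cardinality split
      have hcard : T.card = T'.card + W.card := by
        classical
        set T₀ := T.filter (fun t => x ∉ t) with hT0
        set T₁ := T.filter (fun t => ¬ x ∉ t) with hT1
        have hsplit : T₀.card + T₁.card = T.card :=
          card_filter_add_card_filter_not _
        have hTunion : T₀ ∪ T₁ = T := filter_union_filter_not_eq _ T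
        have himg0 : T₀.image (fun t => t.erase x) = T₀ := by
          ext u
          simp only [mem_image]
          constructor
          · rintro ⟨t, ht, rfl⟩
            rwa [erase_eq_of_notMem (mem_filter.mp ht).2]
          · intro hu
            exact ⟨u, hu, erase_eq_of_notMem (mem_filter.mp hu).2⟩
        have hT'eq : T' = T₀ ∪ T₁.image (fun t => t.erase x) := by
          rw [hT'def, ← hTunion, image_union, himg0]
        have himg1 : (T₁.image (fun t => t.erase x)).card = T₁.card := by
          apply card_image_of_injOn
          intro a ha b hb hab
          have hxa : x ∈ a := not_not.mp (mem_filter.mp ha).2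
          have hxb : x ∈ b := not_not.mp (mem_filter.mp hb).2
          rw [← insert_erase hxa, ← insert_erase hxb]
          exact congrArg (insert x) hab
        have hinter : T₀ ∩ T₁.image (fun t => t.erase x) = W := by
          ext u
          simp only [mem_inter, mem_filter, mem_image, hWdef, hT0, hT1, not_not]
          constructor
          · rintro ⟨⟨huT, hxu⟩, ⟨t, ⟨htT, hxt⟩, rfl⟩⟩
            exact ⟨huT, hxu, by rw [insert_erase hxt]; exact htT⟩
          · rintro ⟨huT, hxu, hins⟩
            exact ⟨⟨huT, hxu⟩, ⟨insert x u, ⟨hins, mem_insert_self x u⟩, erase_insert hxu⟩⟩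
        have hcui : (T₀ ∪ T₁.image (fun t => t.erase x)).card + (T₀ ∩ T₁.image (fun t => t.erase x)).card
            = T₀.card + (T₁.image (fun t => t.erase x)).card := card_union_add_card_inter _ _
        rw [hT'eq]
        rw [hinter] at hcui
        omega
      have hedges : (eP T).card ≤ 2 * W.card + ((eP T').card + (eP W).card) := by
        classical
        set Ex := (eP T).filter (fun p => symmDiff p.1 p.2 = {x}) with hExdef
        set Eo := (eP T).filter (fun p => ¬ symmDiff p.1 p.2 = {x}) with hEodef
        have hsplitE : Ex.card + Eo.card = (eP T).card :=
          card_filter_add_card_filter_not _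
        have hEx : Ex.card ≤ 2 * W.card := by
          have hle : Ex.card ≤ (W ×ˢ (Finset.univ : Finset Bool)).card := by
            apply card_le_card_of_injOn
              (fun p => (if x ∈ p.1 then p.2 else p.1, decide (x ∈ p.1)))
            · intro p hp
              obtain ⟨hpT, hps⟩ := mem_filter.mp hp
              obtain ⟨hp1, hp2, _⟩ := mem_eP.mp hpT
              rcases pair_struct hps with ⟨hx1, h2⟩ | ⟨hx2, h1⟩
              · show (if x ∈ p.1 then p.2 else p.1, decide (x ∈ p.1)) ∈ W ×ˢ univ
                rw [if_neg hx1]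
                refine mem_product.mpr ⟨?_, mem_univ _⟩
                rw [hWdef, mem_filter]
                exact ⟨hp1, hx1, h2 ▸ hp2⟩
              · have hx1 : x ∈ p.1 := h1 ▸ mem_insert_self x p.2
                show (if x ∈ p.1 then p.2 else p.1, decide (x ∈ p.1)) ∈ W ×ˢ univ
                rw [if_pos hx1]
                refine mem_product.mpr ⟨?_, mem_univ _⟩
                rw [hWdef, mem_filter]
                exact ⟨hp2, hx2, h1 ▸ hp1⟩
            · intro p hp q hq hpq
              obtain ⟨hpT, hps⟩ := mem_filter.mp hp
              obtain ⟨hqT, hqs⟩ := mem_filter.mp hq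
              have h2 := congrArg Prod.snd hpq
              have h1 := congrArg Prod.fst hpq
              simp only at h1 h2
              by_cases hxp : x ∈ p.1
              · have hxq : x ∈ q.1 := by
                  by_contra hxq
                  rw [decide_eq_true hxp, decide_eq_false hxq] at h2
                  exact absurd h2 (by simp)
                rw [if_pos hxp, if_pos hxq] at h1
                rcases pair_struct hps with ⟨hx1, _⟩ | ⟨_, hp1⟩
                · exact absurd hxp hx1
                rcases pair_struct hqs with ⟨hx1, _⟩ | ⟨_, hq1⟩
                · exact absurd hxq hx1
                exact Prod.ext (by rw [hp1, hq1, h1]) h1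
              · have hxq : x ∉ q.1 := by
                  by_contra hxq
                  rw [decide_eq_false hxp, decide_eq_true hxq] at h2
                  exact absurd h2 (by simp)
                rw [if_neg hxp, if_neg hxq] at h1
                rcases pair_struct hps with ⟨_, hp2⟩ | ⟨_, hp1⟩
                swap
                · exact absurd (hp1 ▸ mem_insert_self x p.2) hxp
                rcases pair_struct hqs with ⟨_, hq2⟩ | ⟨_, hq1⟩
                swap
                · exact absurd (hq1 ▸ mem_insert_self x q.2) hxq
                exact Prod.ext h1 (by rw [hp2, hq2, h1])
          simpa [card_product, mul_comm] using hle
        have hEo : Eo.card ≤ (eP T').card + (eP W).card := by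
          set E₀ := Eo.filter (fun p => x ∉ p.1) with hE0def
          set E₁ := Eo.filter (fun p => ¬ x ∉ p.1) with hE1def
          have hsplit2 : E₀.card + E₁.card = Eo.card :=
            card_filter_add_card_filter_not _
          have hiff : ∀ p ∈ Eo, (x ∈ p.1 ↔ x ∈ p.2) := by
            intro p hp
            obtain ⟨hpT, hne⟩ := mem_filter.mp hp
            obtain ⟨y, hy⟩ := card_eq_one.mp (mem_eP.mp hpT).2.2
            have hxy : x ∉ symmDiff p.1 p.2 := by
              rw [hy]
              simp only [mem_singleton]
              rintro rfl
              exact hne hy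
            rw [Finset.mem_symmDiff] at hxy
            tauto
          set ψ := fun p : Finset α × Finset α => (p.1.erase x, p.2.erase x) with hψdef
          have hψ0 : ∀ p ∈ E₀, ψ p = p := by
            intro p hp
            have hp1 : x ∉ p.1 := (mem_filter.mp hp).2
            have hp2 : x ∉ p.2 := fun h => hp1 ((hiff p (mem_filter.mp hp).1).mpr h)
            simp only [hψdef]
            exact Prod.ext (erase_eq_of_notMem hp1) (erase_eq_of_notMem hp2)
          have hI0 : E₀.image ψ = E₀ := by
            ext q
            simp only [mem_image]
            constructor
            · rintro ⟨p, hp, rfl⟩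
              rw [hψ0 p hp]; exact hp
            · intro hq
              exact ⟨q, hq, hψ0 q hq⟩
          have hinj1 : Set.InjOn ψ E₁ := by
            intro a ha b hb hab
            have hxa1 : x ∈ a.1 := not_not.mp (mem_filter.mp ha).2
            have hxa2 : x ∈ a.2 := (hiff a (mem_filter.mp ha).1).mp hxa1
            have hxb1 : x ∈ b.1 := not_not.mp (mem_filter.mp hb).2
            have hxb2 : x ∈ b.2 := (hiff b (mem_filter.mp hb).1).mp hxb1
            have h1 := congrArg Prod.fst hab
            have h2 := congrArg Prod.snd hab
            simp only [hψdef] at h1 h2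
            exact Prod.ext (by rw [← insert_erase hxa1, ← insert_erase hxb1, h1])
              (by rw [← insert_erase hxa2, ← insert_erase hxb2, h2])
          have hI1card : (E₁.image ψ).card = E₁.card := card_image_of_injOn hinj1
          have hmemEo : ∀ p ∈ Eo, ψ p ∈ eP T' := by
            intro p hp
            obtain ⟨hpT, hne⟩ := mem_filter.mp hp
            obtain ⟨hp1, hp2, hcard1⟩ := mem_eP.mp hpT
            have hxs : x ∉ symmDiff p.1 p.2 := by
              rw [Finset.mem_symmDiff]
              rcases hiff p hp with h
              tauto
            refine mem_eP.mpr ⟨?_, ?_, ?_⟩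
            · exact hT'def ▸ mem_image_of_mem _ hp1
            · exact hT'def ▸ mem_image_of_mem _ hp2
            · show (symmDiff (p.1.erase x) (p.2.erase x)).card = 1
              rw [symmDiff_erase, erase_eq_of_notMem hxs]
              exact hcard1
          have hsub1 : E₀.image ψ ∪ E₁.image ψ ⊆ eP T' := by
            intro q hq
            rcases mem_union.mp hq with hq | hq <;>
            · obtain ⟨p, hp, rfl⟩ := mem_image.mp hq
              exact hmemEo p (mem_of_mem_filter p hp)
          have hsub2 : (E₀.image ψ) ∩ (E₁.image ψ) ⊆ eP W := by
            intro q hq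
            obtain ⟨hq0, hq1⟩ := mem_inter.mp hq
            rw [hI0] at hq0
            obtain ⟨p, hp, hpq⟩ := mem_image.mp hq1
            have hq0' := mem_filter.mp hq0
            have hqEo := hq0'.1
            obtain ⟨hqT, _⟩ := mem_filter.mp hqEo
            obtain ⟨hq1T, hq2T, hqc⟩ := mem_eP.mp hqT
            have hxq1 : x ∉ q.1 := hq0'.2
            have hxq2 : x ∉ q.2 := fun h => hxq1 ((hiff q hqEo).mpr h)
            have hxp1 : x ∈ p.1 := not_not.mp (mem_filter.mp hp).2
            have hxp2 : x ∈ p.2 := (hiff p (mem_filter.mp hp).1).mp hxp1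
            have hpEo := (mem_filter.mp hp).1
            obtain ⟨hpT, _⟩ := mem_filter.mp hpEo
            obtain ⟨hp1T, hp2T, _⟩ := mem_eP.mp hpT
            have hins1 : insert x q.1 = p.1 := by
              rw [← (congrArg Prod.fst hpq : p.1.erase x = q.1), insert_erase hxp1]
            have hins2 : insert x q.2 = p.2 := by
              rw [← (congrArg Prod.snd hpq : p.2.erase x = q.2), insert_erase hxp2]
            refine mem_eP.mpr ⟨?_, ?_, hqc⟩
            · rw [hWdef, mem_filter]
              exact ⟨hq1T, hxq1, hins1 ▸ hp1T⟩
            · rw [hWdef, mem_filter]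
              exact ⟨hq2T, hxq2, hins2 ▸ hp2T⟩
          have hcui : (E₀.image ψ ∪ E₁.image ψ).card + (E₀.image ψ ∩ E₁.image ψ).card
              = (E₀.image ψ).card + (E₁.image ψ).card := card_union_add_card_inter _ _
          rw [hI0] at hsub1 hsub2 hcui
          have h1 := card_le_card hsub1
          have h2 := card_le_card hsub2
          omega
        omega
      -- recursion facts
      have hU'card : U'.card ≤ k := by
        rw [hU'def, card_erase_of_mem hx]; omega
      have hT'U : ∀ t ∈ T', t ⊆ U' := by
        intro t ht
        rw [hT'def, mem_image] at ht
        obtain ⟨u, hu, rfl⟩ := ht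
        exact erase_subset_erase x (hTU u hu)
      have hT'sh : ∀ B : Finset α, (∀ C ⊆ B, ∃ t ∈ T', t ∩ B = C) → B.card ≤ d₀ := by
        intro B hB
        have hxB : x ∉ B := by
          obtain ⟨t', ht', htB⟩ := hB B Subset.rfl
          rw [hT'def, mem_image] at ht'
          obtain ⟨u, _, rfl⟩ := ht'
          intro hxB
          have hxB2 : x ∈ u.erase x ∩ B := by rw [htB]; exact hxB
          exact (mem_erase.mp ((mem_inter.mp hxB2).1)).1 rfl
        apply hsh B
        intro C hC
        obtain ⟨t', ht', htB⟩ := hB C hC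
        rw [hT'def, mem_image] at ht'
        obtain ⟨u, hu, rfl⟩ := ht'
        refine ⟨u, hu, ?_⟩
        rw [← htB]
        ext y
        simp only [mem_inter, mem_erase]
        constructor
        · rintro ⟨hy, hyB⟩
          exact ⟨⟨fun h => hxB (h ▸ hyB), hy⟩, hyB⟩
        · rintro ⟨⟨_, hy⟩, hyB⟩
          exact ⟨hy, hyB⟩
      have hrecT' : (eP T').card ≤ 2 * d₀ * T'.card := ih d₀ U' T' hU'card hT'U hT'sh
      rcases eq_or_ne W ∅ with hW | hW
      · have : (eP W).card = 0 := by rw [hW]; simp [eP]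
        have hT'le : T'.card ≤ T.card := card_image_le
        calc (eP T).card ≤ 2 * W.card + ((eP T').card + (eP W).card) := hedges
          _ = (eP T').card := by rw [hW]; simp [eP]
          _ ≤ 2 * d₀ * T'.card := hrecT'
          _ ≤ 2 * d₀ * T.card := Nat.mul_le_mul_left _ hT'le
      · -- W nonempty, d₀ ≥ 1
        obtain ⟨w₀, hw₀⟩ := nonempty_of_ne_empty hW
        have hw₀' := mem_filter.mp hw₀
        have hd₀ : 1 ≤ d₀ := by
          have : ({x} : Finset α).card ≤ d₀ := by
            apply hsh
            intro C hC
            rcases subset_singleton_iff.mp hC with rfl | rfl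
            · exact ⟨w₀, hw₀'.1, by simp [hw₀'.2.1]⟩
            · exact ⟨insert x w₀, hw₀'.2.2, by simp⟩
          simpa using this
        have hWU : ∀ t ∈ W, t ⊆ U' := by
          intro t ht
          have ht' := mem_filter.mp ht
          exact (subset_erase).mpr ⟨hTU t ht'.1, ht'.2.1⟩
        have hWsh : ∀ B : Finset α, (∀ C ⊆ B, ∃ t ∈ W, t ∩ B = C) → B.card ≤ d₀ - 1 := by
          intro B hB
          have hxB : x ∉ B := by
            obtain ⟨t, ht, htB⟩ := hB B Subset.rfl
            have hxt := (mem_filter.mp ht).2.1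
            intro h
            have h2 : x ∈ t ∩ B := by rw [htB]; exact h
            exact hxt (mem_inter.mp h2).1
          have : (insert x B).card ≤ d₀ := by
            apply hsh
            intro C hC
            obtain ⟨t, ht, htB⟩ := hB (C.erase x) (fun y hy => by
              have := mem_erase.mp hy
              rcases mem_insert.mp (hC this.2) with h | h
              · exact absurd h this.1
              · exact h)
            have htW := mem_filter.mp ht
            by_cases hxC : x ∈ C
            · refine ⟨insert x t, htW.2.2, ?_⟩
              ext y
              simp only [mem_inter, mem_insert]
              constructor
              · rintro ⟨hy1 | hy1, hy2 | hy2⟩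
                · exact hy2 ▸ hy1 ▸ hxC
                · exact hy1 ▸ hxC
                · exact absurd (hy2 ▸ hy1) htW.2.1
                · have : y ∈ t ∩ B := mem_inter.mpr ⟨hy1, hy2⟩
                  rw [htB] at this
                  exact (mem_erase.mp this).2
              · intro hyC
                rcases eq_or_ne y x with rfl | hy
                · exact ⟨Or.inl rfl, Or.inl rfl⟩
                · have : y ∈ t ∩ B := htB ▸ (mem_erase.mpr ⟨hy, hyC⟩)
                  have := mem_inter.mp this
                  exact ⟨Or.inr this.1, Or.inr this.2⟩
            · have hCC : C.erase x = C := erase_eq_of_notMem hxC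
              rw [hCC] at htB
              refine ⟨t, htW.1, ?_⟩
              rw [← htB]
              ext y
              simp only [mem_inter, mem_insert]
              constructor
              · rintro ⟨hy1, rfl | hy2⟩
                · exact absurd hy1 htW.2.1
                · exact ⟨hy1, hy2⟩
              · rintro ⟨hy1, hy2⟩
                exact ⟨hy1, Or.inr hy2⟩
          rw [card_insert_of_notMem hxB] at this
          omega
        have hrecW : (eP W).card ≤ 2 * (d₀ - 1) * W.card := ih (d₀ - 1) U' W hU'card hWU hWsh
        calc (eP T).card ≤ 2 * W.card + ((eP T').card + (eP W).card) := hedges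
          _ ≤ 2 * W.card + (2 * d₀ * T'.card + 2 * (d₀ - 1) * W.card) := by
              exact Nat.add_le_add_left (Nat.add_le_add hrecT' hrecW) _
          _ = 2 * d₀ * T'.card + (2 * W.card + 2 * (d₀ - 1) * W.card) := by ring
          _ = 2 * d₀ * T'.card + 2 * d₀ * W.card := by
              have : 2 * W.card + 2 * (d₀ - 1) * W.card = 2 * d₀ * W.card := by
                obtain ⟨e, rfl⟩ : ∃ e, d₀ = e + 1 := ⟨d₀ - 1, (Nat.succ_pred_eq_of_pos hd₀).symm⟩
                simp [Nat.add_sub_cancel]; ring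
              rw [this]
          _ = 2 * d₀ * T.card := by rw [hcard]; ring


theorem minsum : ∀ (k : ℕ) (T : Finset (Finset α)) (w : Finset α → ℕ) (D : ℕ), T.card ≤ k →
    (∀ V ⊆ T, (eP V).card ≤ D * V.card) →
    ∑ p ∈ eP T, min (w p.1) (w p.2) ≤ 2 * D * ∑ t ∈ T, w t := by
  intro k
  induction k with
  | zero =>
    intro T w D hT _
    have : T = ∅ := card_eq_zero.mp (Nat.le_zero.mp hT)
    subst this
    simp [eP]
  | succ k ih =>
    intro T w D hT hdeg
    rcases T.eq_empty_or_nonempty with rfl | hne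
    · simp [eP]
    -- fiber count
    have hfib : (eP T).card = ∑ t ∈ T, ((eP T).filter (fun p => p.1 = t)).card := by
      apply card_eq_sum_card_fiberwise
      intro p hp
      exact (mem_eP.mp hp).1
    obtain ⟨t₀, ht₀, hdeg₀⟩ : ∃ t₀ ∈ T, ((eP T).filter (fun p => p.1 = t₀)).card ≤ D := by
      by_contra hcon
      push_neg at hcon
      have : D * T.card + 1 * T.card ≤ (eP T).card := by
        rw [hfib]
        calc D * T.card + 1 * T.card = ∑ _t ∈ T, (D + 1) := by
              rw [sum_const, smul_eq_mul]; ring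
          _ ≤ ∑ t ∈ T, ((eP T).filter (fun p => p.1 = t)).card :=
              sum_le_sum (fun t ht => hcon t ht)
      have h2 := hdeg T Subset.rfl
      have h3 : 1 * T.card ≤ 0 := by omega
      rw [one_mul] at h3
      exact absurd (card_eq_zero.mp (Nat.le_zero.mp h3)) (nonempty_iff_ne_empty.mp hne)
    -- swap degree
    have hdeg₀' : ((eP T).filter (fun p => p.2 = t₀)).card ≤ D := by
      have : ((eP T).filter (fun p => p.2 = t₀)).card
          ≤ ((eP T).filter (fun p => p.1 = t₀)).card := by
        apply card_le_card_of_injOn (fun p => (p.2, p.1))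
        · intro p hp
          obtain ⟨hpT, hp2⟩ := mem_filter.mp hp
          obtain ⟨h1, h2, h3⟩ := mem_eP.mp hpT
          refine mem_filter.mpr ⟨mem_eP.mpr ⟨h2, h1, ?_⟩, hp2⟩
          rwa [symmDiff_comm]
        · intro a _ b _ hab
          have h1 := congrArg Prod.fst hab
          have h2 := congrArg Prod.snd hab
          simp only at h1 h2
          exact Prod.ext h2 h1
      omega
    -- decompose the sum
    have hsplit1 : ∑ p ∈ eP T, min (w p.1) (w p.2)
        = ∑ p ∈ (eP T).filter (fun p => p.1 = t₀), min (w p.1) (w p.2)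
        + ∑ p ∈ (eP T).filter (fun p => ¬ p.1 = t₀), min (w p.1) (w p.2) :=
      (sum_filter_add_sum_filter_not _ _ _).symm
    have hsplit2 : ∑ p ∈ (eP T).filter (fun p => ¬ p.1 = t₀), min (w p.1) (w p.2)
        = ∑ p ∈ ((eP T).filter (fun p => ¬ p.1 = t₀)).filter (fun p => p.2 = t₀), min (w p.1) (w p.2)
        + ∑ p ∈ ((eP T).filter (fun p => ¬ p.1 = t₀)).filter (fun p => ¬ p.2 = t₀), min (w p.1) (w p.2) :=
      (sum_filter_add_sum_filter_not _ _ _).symm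
    -- bound each part
    have hb1 : ∑ p ∈ (eP T).filter (fun p => p.1 = t₀), min (w p.1) (w p.2) ≤ D * w t₀ := by
      calc ∑ p ∈ (eP T).filter (fun p => p.1 = t₀), min (w p.1) (w p.2)
          ≤ ∑ _p ∈ (eP T).filter (fun p => p.1 = t₀), w t₀ := by
            apply sum_le_sum
            intro p hp
            have : p.1 = t₀ := (mem_filter.mp hp).2
            rw [this]
            exact min_le_left _ _
        _ = ((eP T).filter (fun p => p.1 = t₀)).card * w t₀ := by
            rw [sum_const, smul_eq_mul]
        _ ≤ D * w t₀ := Nat.mul_le_mul_right _ hdeg₀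
    have hb2 : ∑ p ∈ ((eP T).filter (fun p => ¬ p.1 = t₀)).filter (fun p => p.2 = t₀),
        min (w p.1) (w p.2) ≤ D * w t₀ := by
      have hsub : ((eP T).filter (fun p => ¬ p.1 = t₀)).filter (fun p => p.2 = t₀)
          ⊆ (eP T).filter (fun p => p.2 = t₀) := by
        intro p hp
        obtain ⟨hp1, hp2⟩ := mem_filter.mp hp
        exact mem_filter.mpr ⟨mem_of_mem_filter p hp1, hp2⟩
      calc ∑ p ∈ ((eP T).filter (fun p => ¬ p.1 = t₀)).filter (fun p => p.2 = t₀), min (w p.1) (w p.2)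
          ≤ ∑ p ∈ (eP T).filter (fun p => p.2 = t₀), min (w p.1) (w p.2) :=
            sum_le_sum_of_subset hsub
        _ ≤ ∑ _p ∈ (eP T).filter (fun p => p.2 = t₀), w t₀ := by
            apply sum_le_sum
            intro p hp
            have : p.2 = t₀ := (mem_filter.mp hp).2
            rw [this]
            exact min_le_right _ _
        _ = ((eP T).filter (fun p => p.2 = t₀)).card * w t₀ := by
            rw [sum_const, smul_eq_mul]
        _ ≤ D * w t₀ := Nat.mul_le_mul_right _ hdeg₀'
    have hb3 : ∑ p ∈ ((eP T).filter (fun p => ¬ p.1 = t₀)).filter (fun p => ¬ p.2 = t₀),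
        min (w p.1) (w p.2) ≤ 2 * D * ∑ t ∈ T.erase t₀, w t := by
      have hsub : ((eP T).filter (fun p => ¬ p.1 = t₀)).filter (fun p => ¬ p.2 = t₀)
          ⊆ eP (T.erase t₀) := by
        intro p hp
        obtain ⟨hp1, hp2⟩ := mem_filter.mp hp
        obtain ⟨hpT, hp1'⟩ := mem_filter.mp hp1
        obtain ⟨h1, h2, h3⟩ := mem_eP.mp hpT
        exact mem_eP.mpr ⟨mem_erase.mpr ⟨hp1', h1⟩, mem_erase.mpr ⟨hp2, h2⟩, h3⟩
      calc ∑ p ∈ ((eP T).filter (fun p => ¬ p.1 = t₀)).filter (fun p => ¬ p.2 = t₀), min (w p.1) (w p.2)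
          ≤ ∑ p ∈ eP (T.erase t₀), min (w p.1) (w p.2) := sum_le_sum_of_subset hsub
        _ ≤ 2 * D * ∑ t ∈ T.erase t₀, w t := by
            apply ih (T.erase t₀) w D
            · have := card_erase_of_mem ht₀
              have := card_pos.mpr hne
              omega
            · intro V hV
              exact hdeg V (hV.trans (erase_subset _ _))
    have hfinal : w t₀ + ∑ t ∈ T.erase t₀, w t = ∑ t ∈ T, w t := add_sum_erase T w ht₀
    calc ∑ p ∈ eP T, min (w p.1) (w p.2)
        ≤ D * w t₀ + (D * w t₀ + 2 * D * ∑ t ∈ T.erase t₀, w t) := by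
          rw [hsplit1, hsplit2]
          exact Nat.add_le_add hb1 (Nat.add_le_add hb2 hb3)
      _ = 2 * D * (w t₀ + ∑ t ∈ T.erase t₀, w t) := by ring
      _ = 2 * D * ∑ t ∈ T, w t := by rw [hfinal]


section Count
variable [Fintype α] (F : Finset (Finset α))

def trace (S : Finset α) : Finset (Finset α) := F.image (fun A => A ∩ S)

def wt (S : Finset α) (t : Finset α) : ℕ := (F.filter (fun A => A ∩ S = t)).card

def wA (S : Finset α) (a : α) (t : Finset α) : ℕ :=
  (F.filter (fun A => A ∩ S = t ∧ a ∈ A)).card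

def wB (S : Finset α) (a : α) (t : Finset α) : ℕ :=
  (F.filter (fun A => A ∩ S = t ∧ a ∉ A)).card

lemma sum_wt (S : Finset α) : ∑ t ∈ trace F S, wt F S t = F.card :=
  (card_eq_sum_card_fiberwise (fun A hA => mem_image_of_mem _ hA)).symm

lemma wt_pos {S t : Finset α} (ht : t ∈ trace F S) : 1 ≤ wt F S t := by
  obtain ⟨A, hA, rfl⟩ := mem_image.mp ht
  exact card_pos.mpr ⟨A, mem_filter.mpr ⟨hA, rfl⟩⟩

lemma subset_of_mem_trace {S t : Finset α} (ht : t ∈ trace F S) : t ⊆ S := by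
  obtain ⟨A, _, rfl⟩ := mem_image.mp ht
  exact inter_subset_right

/-- the two weights on `S.erase a` vs weights on `S` -/
lemma wB_eq {S : Finset α} {a : α} (ha : a ∈ S) {t : Finset α} (ht : t ⊆ S.erase a) :
    wB F (S.erase a) a t = wt F S t := by
  unfold wB wt
  congr 1
  apply filter_congr
  intro A _
  constructor
  · rintro ⟨h1, h2⟩
    ext y
    simp only [mem_inter]
    constructor
    · rintro ⟨hyA, hyS⟩
      have hya : y ≠ a := fun h => h2 (h ▸ hyA)
      have : y ∈ A ∩ S.erase a := mem_inter.mpr ⟨hyA, mem_erase.mpr ⟨hya, hyS⟩⟩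
      exact h1 ▸ this
    · intro hyt
      have : y ∈ A ∩ S.erase a := h1.symm ▸ hyt
      obtain ⟨hyA, hyS⟩ := mem_inter.mp this
      exact ⟨hyA, (mem_erase.mp hyS).2⟩
  · intro h1
    have h2 : a ∉ A := by
      intro haA
      have : a ∈ t := h1 ▸ mem_inter.mpr ⟨haA, ha⟩
      exact (mem_erase.mp (ht this)).1 rfl
    constructor
    · ext y
      simp only [mem_inter, mem_erase]
      constructor
      · rintro ⟨hyA, hy, hyS⟩
        exact h1 ▸ mem_inter.mpr ⟨hyA, hyS⟩
      · intro hyt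
        have := mem_inter.mp (h1.symm ▸ hyt)
        have hya : y ≠ a := fun h => h2 (h ▸ this.1)
        exact ⟨this.1, hya, this.2⟩
    · exact h2

lemma wA_eq {S : Finset α} {a : α} (ha : a ∈ S) {t : Finset α} (ht : t ⊆ S.erase a) :
    wA F (S.erase a) a t = wt F S (insert a t) := by
  unfold wA wt
  congr 1
  apply filter_congr
  intro A _
  have hat : a ∉ t := fun h => (mem_erase.mp (ht h)).1 rfl
  constructor
  · rintro ⟨h1, h2⟩
    ext y
    simp only [mem_inter, mem_insert]
    constructor
    · rintro ⟨hyA, hyS⟩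
      rcases eq_or_ne y a with rfl | hya
      · exact Or.inl rfl
      · exact Or.inr (h1 ▸ mem_inter.mpr ⟨hyA, mem_erase.mpr ⟨hya, hyS⟩⟩)
    · rintro (rfl | hyt)
      · exact ⟨h2, ha⟩
      · have := mem_inter.mp (h1.symm ▸ hyt)
        exact ⟨this.1, (mem_erase.mp this.2).2⟩
  · intro h1
    have h2 : a ∈ A := by
      have : a ∈ A ∩ S := h1.symm ▸ mem_insert_self a t
      exact (mem_inter.mp this).1
    refine ⟨?_, h2⟩
    ext y
    simp only [mem_inter, mem_erase]
    constructor
    · rintro ⟨hyA, hy, hyS⟩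
      have : y ∈ insert a t := h1 ▸ mem_inter.mpr ⟨hyA, hyS⟩
      rcases mem_insert.mp this with rfl | hyt
      · exact absurd rfl hy
      · exact hyt
    · intro hyt
      have hya : y ≠ a := fun h => hat (h ▸ hyt)
      have : y ∈ A ∩ S := h1.symm ▸ mem_insert.mpr (Or.inr hyt)
      have := mem_inter.mp this
      exact ⟨this.1, hya, this.2⟩

lemma wA_add_wB (S : Finset α) (a : α) (t : Finset α) :
    wA F S a t + wB F S a t = wt F S t := by
  unfold wA wB wt
  rw [← filter_filter, ← filter_filter]
  exact card_filter_add_card_filter_not _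

/-- Step A: minsum bound for the trace family. -/
lemma stepA (c d d₀ : ℕ) (hπ : ∀ V0 : Finset α, 1 ≤ V0.card →
      (F.image (fun A => A ∩ V0)).card ≤ c * V0.card ^ d)
    (hd₀ : ∀ z : ℕ, 2 ^ z ≤ c * z ^ d → z ≤ d₀) (S : Finset α) :
    ∑ p ∈ eP (trace F S), min (wt F S p.1) (wt F S p.2) ≤ 4 * d₀ * F.card := by
  have hdeg : ∀ V ⊆ trace F S, (eP V).card ≤ (2 * d₀) * V.card := by
    intro V hV
    apply hauUD S.card d₀ S V le_rfl
    · intro t ht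
      exact subset_of_mem_trace F (hV ht)
    · intro B hB
      rcases B.eq_empty_or_nonempty with rfl | hBne
      · simp
      · have hBS : B ⊆ S := by
          obtain ⟨t, ht, htB⟩ := hB B Subset.rfl
          have hBt : B ⊆ t := by
            intro y hy
            rw [← htB] at hy
            exact (mem_inter.mp hy).1
          exact hBt.trans (subset_of_mem_trace F (hV ht))
        have hpow : B.powerset ⊆ F.image (fun A => A ∩ B) := by
          intro C hC
          obtain ⟨t, ht, htB⟩ := hB C (mem_powerset.mp hC)
          obtain ⟨A, hA, rfl⟩ := mem_image.mp (hV ht)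
          refine mem_image.mpr ⟨A, hA, ?_⟩
          rw [← htB]
          ext y
          simp only [mem_inter]
          exact ⟨fun ⟨h1, h2⟩ => ⟨⟨h1, hBS h2⟩, h2⟩, fun ⟨⟨h1, _⟩, h2⟩ => ⟨h1, h2⟩⟩
        have h2 : 2 ^ B.card ≤ c * B.card ^ d := by
          calc 2 ^ B.card = B.powerset.card := (card_powerset B).symm
            _ ≤ (F.image (fun A => A ∩ B)).card := card_le_card hpow
            _ ≤ c * B.card ^ d := hπ B (card_pos.mpr hBne)
        exact hd₀ _ h2
  calc ∑ p ∈ eP (trace F S), min (wt F S p.1) (wt F S p.2)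
      ≤ 2 * (2 * d₀) * ∑ t ∈ trace F S, wt F S t :=
        minsum (trace F S).card (trace F S) (wt F S) (2 * d₀) le_rfl hdeg
    _ = 4 * d₀ * F.card := by rw [sum_wt]; ring

/-- Step B: directions decomposition lower bound. -/
lemma stepB (S : Finset α) :
    ∑ a ∈ S, ∑ t ∈ trace F (S.erase a), min (wA F (S.erase a) a t) (wB F (S.erase a) a t)
      ≤ ∑ p ∈ eP (trace F S), min (wt F S p.1) (wt F S p.2) := by
  classical
  rw [sum_sigma']
  set f : (_ : α) × Finset α → ℕ :=
    fun x => min (wA F (S.erase x.1) x.1 x.2) (wB F (S.erase x.1) x.1 x.2) with hf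
  set Q := S.sigma (fun a => trace F (S.erase a)) with hQ
  rw [← sum_filter_ne_zero Q]
  set Q' := Q.filter (fun x => f x ≠ 0) with hQ'
  set ι : (_ : α) × Finset α → Finset α × Finset α := fun x => (insert x.1 x.2, x.2) with hι
  have hmemQ' : ∀ x ∈ Q', x.1 ∈ S ∧ x.2 ∈ trace F (S.erase x.1) ∧ f x ≠ 0 := by
    intro x hx
    obtain ⟨hxQ, hfx⟩ := mem_filter.mp hx
    obtain ⟨h1, h2⟩ := mem_sigma.mp hxQ
    exact ⟨h1, h2, hfx⟩
  have hval : ∀ x ∈ Q', f x = min (wt F S (ι x).1) (wt F S (ι x).2) := by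
    intro x hx
    obtain ⟨h1, h2, _⟩ := hmemQ' x hx
    have hsub := subset_of_mem_trace F h2
    simp only [hι, hf]
    rw [wA_eq F h1 hsub, wB_eq F h1 hsub]
  have hinj : Set.InjOn ι Q' := by
    intro x hx y hy hxy
    obtain ⟨hx1, hx2, _⟩ := hmemQ' x hx
    obtain ⟨hy1, hy2, _⟩ := hmemQ' y hy
    have h2 : x.2 = y.2 := congrArg Prod.snd hxy
    have h1 : insert x.1 x.2 = insert y.1 y.2 := congrArg Prod.fst hxy
    have hax : x.1 ∉ x.2 := fun h => (mem_erase.mp (subset_of_mem_trace F hx2 h)).1 rfl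
    have hay : y.1 ∉ y.2 := fun h => (mem_erase.mp (subset_of_mem_trace F hy2 h)).1 rfl
    have : x.1 = y.1 := by
      have : x.1 ∈ insert y.1 y.2 := h1 ▸ mem_insert_self x.1 x.2
      rcases mem_insert.mp this with h | h
      · exact h
      · rw [← h2] at h; exact absurd h hax
    exact Sigma.ext this (heq_of_eq h2)
  have himg : Q'.image ι ⊆ eP (trace F S) := by
    intro p hp
    obtain ⟨x, hx, rfl⟩ := mem_image.mp hp
    obtain ⟨h1, h2, hfx⟩ := hmemQ' x hx
    have hsub := subset_of_mem_trace F h2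
    have hax : x.1 ∉ x.2 := fun h => (mem_erase.mp (hsub h)).1 rfl
    have hwA : 1 ≤ wA F (S.erase x.1) x.1 x.2 := by
      simp only [hf] at hfx; omega
    have hwB : 1 ≤ wB F (S.erase x.1) x.1 x.2 := by
      simp only [hf] at hfx; omega
    rw [wA_eq F h1 hsub] at hwA
    rw [wB_eq F h1 hsub] at hwB
    have hm1 : (insert x.1 x.2) ∈ trace F S := by
      unfold wt at hwA
      obtain ⟨A, hA⟩ := card_pos.mp hwA
      obtain ⟨hAF, hAt⟩ := mem_filter.mp hA
      exact mem_image.mpr ⟨A, hAF, hAt⟩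
    have hm2 : x.2 ∈ trace F S := by
      unfold wt at hwB
      obtain ⟨A, hA⟩ := card_pos.mp hwB
      obtain ⟨hAF, hAt⟩ := mem_filter.mp hA
      exact mem_image.mpr ⟨A, hAF, hAt⟩
    refine mem_eP.mpr ⟨hm1, hm2, ?_⟩
    have : symmDiff (insert x.1 x.2) x.2 = {x.1} := by
      ext y
      simp only [Finset.mem_symmDiff, mem_insert, mem_singleton]
      constructor
      · rintro (⟨rfl | h, h2⟩ | ⟨h1, h2⟩)
        · rfl
        · exact absurd h h2
        · exact absurd (Or.inr h1) h2
      · rintro rfl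
        exact Or.inl ⟨Or.inl rfl, hax⟩
    rw [this]
    exact card_singleton _
  calc ∑ x ∈ Q', f x = ∑ p ∈ Q'.image ι, min (wt F S p.1) (wt F S p.2) := by
        rw [sum_image (fun x hx y hy h => hinj hx hy h)]
        exact sum_congr rfl hval
    _ ≤ ∑ p ∈ eP (trace F S), min (wt F S p.1) (wt F S p.2) :=
        sum_le_sum_of_subset himg

/-- Step C: separation lower bound per class. -/
lemma sep_class (S' : Finset α) (δ : ℕ)
    (hsep : ∀ A ∈ F, ∀ B ∈ F, A ≠ B → δ ≤ (symmDiff A B).card)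
    {t : Finset α} (ht : t ∈ trace F S') :
    δ * (wt F S' t - 1) ≤ 2 * ∑ a ∈ Finset.univ \ S', min (wA F S' a t) (wB F S' a t) := by
  classical
  set C := F.filter (fun A => A ∩ S' = t) with hC
  have hwt : wt F S' t = C.card := rfl
  have hw1 : 1 ≤ C.card := wt_pos F ht
  have hwAi : ∀ a : α, wA F S' a t = ∑ A ∈ C, (if a ∈ A then 1 else 0) := by
    intro a
    rw [hC, ← card_filter]
    unfold wA
    rw [filter_filter]
  have hwBi : ∀ a : α, wB F S' a t = ∑ B ∈ C, (if a ∉ B then 1 else 0) := by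
    intro a
    rw [hC, ← card_filter]
    unfold wB
    rw [filter_filter]
  -- pointwise: C.card * min ≥ wA * wB
  have hmin : ∀ a : α, wA F S' a t * wB F S' a t ≤ C.card * min (wA F S' a t) (wB F S' a t) := by
    intro a
    have hA : wA F S' a t ≤ C.card := by
      rw [hC]
      unfold wA
      apply card_le_card
      intro A hA
      obtain ⟨h1, h2⟩ := mem_filter.mp hA
      exact mem_filter.mpr ⟨h1, h2.1⟩
    have hB : wB F S' a t ≤ C.card := by
      unfold wB
      rw [hC]
      apply card_le_card
      intro A hA
      obtain ⟨h1, h2⟩ := mem_filter.mp hA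
      exact mem_filter.mpr ⟨h1, h2.1⟩
    rcases le_total (wA F S' a t) (wB F S' a t) with h | h
    · rw [min_eq_left h]
      rw [mul_comm]
      exact Nat.mul_le_mul_right _ hB
    · rw [min_eq_right h]
      exact Nat.mul_le_mul_right _ hA
  -- double sum identity
  have hdouble : ∀ a : α, wA F S' a t * wB F S' a t
      = ∑ A ∈ C, ∑ B ∈ C, (if a ∈ A then 1 else 0) * (if a ∉ B then 1 else 0) := by
    intro a
    rw [hwAi a, hwBi a, sum_mul_sum]
  have hinner : ∀ A B : Finset α, ∑ a ∈ Finset.univ \ S', (if a ∈ A then 1 else 0) * (if a ∉ B then 1 else 0)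
      = ((A \ B) \ S').card := by
    intro A B
    have : ∀ a : α, (if a ∈ A then 1 else 0) * (if a ∉ B then 1 else 0)
        = if a ∈ A \ B then 1 else 0 := by
      intro a
      by_cases h1 : a ∈ A <;> by_cases h2 : a ∈ B <;> simp [h1, h2, mem_sdiff]
    simp_rw [this]
    rw [← card_filter]
    congr 1
    ext a
    simp only [mem_filter, mem_sdiff, mem_univ, true_and]
    tauto
  have hsum2 : ∑ a ∈ Finset.univ \ S', wA F S' a t * wB F S' a t
      = ∑ A ∈ C, ∑ B ∈ C, ((A \ B) \ S').card := by
    simp_rw [hdouble]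
    rw [sum_comm]
    apply sum_congr rfl
    intro A _
    rw [sum_comm]
    apply sum_congr rfl
    intro B _
    exact hinner A B
  -- swap symmetry
  have hswap : ∑ A ∈ C, ∑ B ∈ C, ((A \ B) \ S').card = ∑ A ∈ C, ∑ B ∈ C, ((B \ A) \ S').card :=
    sum_comm
  -- pair lower bound
  have hpair : ∀ A ∈ C, ∀ B ∈ C, A ≠ B →
      δ ≤ ((A \ B) \ S').card + ((B \ A) \ S').card := by
    intro A hA B hB hne
    obtain ⟨hAF, hAt⟩ := mem_filter.mp hA
    obtain ⟨hBF, hBt⟩ := mem_filter.mp hB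
    have hd1 : (A \ B) \ S' = A \ B := by
      ext y
      simp only [mem_sdiff]
      constructor
      · tauto
      · rintro ⟨h1, h2⟩
        refine ⟨⟨h1, h2⟩, fun hyS => ?_⟩
        have : y ∈ A ∩ S' := mem_inter.mpr ⟨h1, hyS⟩
        rw [hAt, ← hBt] at this
        exact h2 (mem_inter.mp this).1
    have hd2 : (B \ A) \ S' = B \ A := by
      ext y
      simp only [mem_sdiff]
      constructor
      · tauto
      · rintro ⟨h1, h2⟩
        refine ⟨⟨h1, h2⟩, fun hyS => ?_⟩
        have : y ∈ B ∩ S' := mem_inter.mpr ⟨h1, hyS⟩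
        rw [hBt, ← hAt] at this
        exact h2 (mem_inter.mp this).1
    rw [hd1, hd2]
    have : (symmDiff A B).card = (A \ B).card + (B \ A).card := by
      rw [symmDiff_def]
      show ((A \ B) ∪ (B \ A)).card = _
      exact card_union_of_disjoint disjoint_sdiff_sdiff
    rw [← this]
    exact hsep A hAF B hBF hne
  -- total pair bound
  have htotal : δ * (C.card * (C.card - 1)) ≤ 2 * ∑ A ∈ C, ∑ B ∈ C, ((A \ B) \ S').card := by
    have h2 : 2 * ∑ A ∈ C, ∑ B ∈ C, ((A \ B) \ S').card
        = ∑ A ∈ C, ∑ B ∈ C, (((A \ B) \ S').card + ((B \ A) \ S').card) := by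
      rw [two_mul]
      nth_rewrite 2 [hswap]
      rw [← sum_add_distrib]
      apply sum_congr rfl
      intro A _
      rw [← sum_add_distrib]
    rw [h2]
    calc δ * (C.card * (C.card - 1)) = ∑ A ∈ C, (C.card - 1) * δ := by
          rw [sum_const, smul_eq_mul]; ring
      _ ≤ ∑ A ∈ C, ∑ B ∈ C, (((A \ B) \ S').card + ((B \ A) \ S').card) := by
        apply sum_le_sum
        intro A hA
        calc (C.card - 1) * δ = (C.erase A).card * δ := by rw [card_erase_of_mem hA]
          _ ≤ ∑ B ∈ C.erase A, (((A \ B) \ S').card + ((B \ A) \ S').card) := by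
            have := Finset.card_nsmul_le_sum (C.erase A)
              (fun B => ((A \ B) \ S').card + ((B \ A) \ S').card) δ
              (fun B hB => hpair A hA B (mem_of_mem_erase hB) (fun h => (mem_erase.mp hB).1 h.symm))
            simpa [smul_eq_mul] using this
          _ ≤ ∑ B ∈ C, (((A \ B) \ S').card + ((B \ A) \ S').card) :=
            sum_le_sum_of_subset (erase_subset _ _)
  -- assemble
  have hchain : C.card * (δ * (C.card - 1)) ≤ C.card * (2 * ∑ a ∈ Finset.univ \ S', min (wA F S' a t) (wB F S' a t)) := by
    calc C.card * (δ * (C.card - 1)) = δ * (C.card * (C.card - 1)) := by ring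
      _ ≤ 2 * ∑ A ∈ C, ∑ B ∈ C, ((A \ B) \ S').card := htotal
      _ = 2 * ∑ a ∈ Finset.univ \ S', wA F S' a t * wB F S' a t := by rw [hsum2]
      _ ≤ 2 * ∑ a ∈ Finset.univ \ S', C.card * min (wA F S' a t) (wB F S' a t) := by
          apply Nat.mul_le_mul_left
          exact sum_le_sum (fun a _ => hmin a)
      _ = C.card * (2 * ∑ a ∈ Finset.univ \ S', min (wA F S' a t) (wB F S' a t)) := by
          rw [← mul_sum]; ring
  rw [hwt]
  exact Nat.le_of_mul_le_mul_left hchain (by omega)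

/-- reindexing pairs (S',a), a ∉ S'  ↔  (S,a), a ∈ S -/
lemma reindex (s : ℕ) (hs : 1 ≤ s) (g : Finset α → α → ℕ) :
    ∑ S' ∈ powersetCard (s-1) (Finset.univ : Finset α), ∑ a ∈ Finset.univ \ S', g S' a
    = ∑ S ∈ powersetCard s (Finset.univ : Finset α), ∑ a ∈ S, g (S.erase a) a := by
  rw [sum_sigma', sum_sigma']
  apply sum_nbij' (i := fun x => (⟨insert x.2 x.1, x.2⟩ : (_ : Finset α) × α))
    (j := fun x => (⟨x.1.erase x.2, x.2⟩ : (_ : Finset α) × α))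
  · rintro ⟨S', a⟩ hx
    obtain ⟨h1, h2⟩ := mem_sigma.mp hx
    have hcard := (mem_powersetCard_univ.mp h1)
    have ha : a ∉ S' := (mem_sdiff.mp h2).2
    refine mem_sigma.mpr ⟨mem_powersetCard_univ.mpr ?_, mem_insert_self _ _⟩
    rw [card_insert_of_notMem ha, hcard]
    omega
  · rintro ⟨S, a⟩ hx
    obtain ⟨h1, h2⟩ := mem_sigma.mp hx
    have hcard := (mem_powersetCard_univ.mp h1)
    refine mem_sigma.mpr ⟨mem_powersetCard_univ.mpr ?_, mem_sdiff.mpr ⟨mem_univ _, notMem_erase _ _⟩⟩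
    rw [card_erase_of_mem h2, hcard]
  · rintro ⟨S', a⟩ hx
    obtain ⟨h1, h2⟩ := mem_sigma.mp hx
    have ha : a ∉ S' := (mem_sdiff.mp h2).2
    simp only
    congr 1
    exact erase_insert ha
  · rintro ⟨S, a⟩ hx
    obtain ⟨h1, h2⟩ := mem_sigma.mp hx
    simp only
    congr 1
    exact insert_erase h2
  · rintro ⟨S', a⟩ hx
    obtain ⟨h1, h2⟩ := mem_sigma.mp hx
    have ha : a ∉ S' := (mem_sdiff.mp h2).2
    simp only
    rw [erase_insert ha]

end Count
end HP

lemma exists_d0 (c d : ℕ) (hc : 2 ≤ c) : ∃ d₀ : ℕ, 1 ≤ d₀ ∧ ∀ z : ℕ, 2 ^ z ≤ c * z ^ d → z ≤ d₀ := by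
  have hs : Summable (fun z : ℕ => (z : ℝ) ^ d * (1/2 : ℝ) ^ z) :=
    summable_pow_mul_geometric_of_norm_lt_one d
      (by rw [Real.norm_eq_abs]; rw [abs_of_pos] <;> norm_num)
  have ht := hs.tendsto_atTop_zero
  have hev : ∀ᶠ z : ℕ in Filter.atTop, (z : ℝ) ^ d * (1/2 : ℝ) ^ z < 1 / c :=
    ht.eventually_lt_const (by positivity)
  obtain ⟨N, hN⟩ := Filter.eventually_atTop.mp hev
  refine ⟨N + 1, by omega, fun z hz => ?_⟩
  by_contra hzc
  push_neg at hzc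
  have hzN : N ≤ z := by omega
  have h1 := hN z hzN
  have hc0 : (0:ℝ) < c := by positivity
  have h2 : (2:ℝ) ^ z ≤ (c:ℝ) * (z:ℝ) ^ d := by exact_mod_cast hz
  have hp : (0:ℝ) < (2:ℝ) ^ z := by positivity
  have h3 : (1/2:ℝ) ^ z = 1 / (2:ℝ)^z := by rw [div_pow, one_pow]
  rw [h3] at h1
  have h4 : (z:ℝ)^d / (2:ℝ)^z < 1/c := by
    rw [div_eq_mul_one_div]; exact h1
  rw [div_lt_div_iff₀ hp hc0] at h4
  nlinarith

open HP in
/-- Haussler's packing lemma: a `δ`-separated family with primal shatter function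
at most `c z ^ d` has at most `c₁ (n/δ) ^ d` members. -/
theorem stmt_5 (c d : ℕ) (hc : 2 ≤ c) (hd : 2 ≤ d) :
    ∃ c1 : ℝ, 0 < c1 ∧ ∀ (n δ : ℕ), 1 ≤ δ → δ ≤ n → ∀ F : Finset (Finset (Fin n)),
      (∀ V0 : Finset (Fin n), 1 ≤ V0.card →
        (F.image (fun A => A ∩ V0)).card ≤ c * V0.card ^ d) →
      (∀ A ∈ F, ∀ B ∈ F, A ≠ B → δ ≤ (symmDiff A B).card) →
      (F.card : ℝ) ≤ c1 * ((n : ℝ) / (δ : ℝ)) ^ d := by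
  classical
  obtain ⟨d₀, hd₀1, hd₀⟩ := exists_d0 c d hc
  refine ⟨2 * c * (16 * d₀ : ℝ) ^ d, by positivity, ?_⟩
  intro n δ hδ hδn F hπ hsep
  have hn1 : 1 ≤ n := le_trans hδ hδn
  have hδ0 : 0 < δ := hδ
  set m := F.card with hm
  -- a natural-number bound in each of the two cases
  have key : (m ≤ 2 * (c * (16*d₀*n/δ) ^ d)) ∨ (δ < 16 * d₀ ∧ m ≤ c * n ^ d) := by
    by_cases hcase : 16 * d₀ ≤ δ
    · left
      set s : ℕ := 16*d₀*n/δ + 1 with hs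
      have hs1 : 1 ≤ s := by rw [hs]; exact Nat.succ_le_succ (Nat.zero_le _)
      have hq1 : 1 ≤ 16*d₀*n/δ := by
        rw [Nat.one_le_div_iff hδ0]
        calc δ ≤ n := hδn
          _ = 1*n := (one_mul n).symm
          _ ≤ (16*d₀)*n := Nat.mul_le_mul_right n (by omega)
      have hs2 : 2 ≤ s := by rw [hs]; exact Nat.succ_le_succ hq1
      have hsub1 : s - 1 = 16*d₀*n/δ := by rw [hs]; simp
      have hs3 : s - 1 ≤ n := by
        rw [hsub1]
        calc 16*d₀*n/δ ≤ δ*n/δ := Nat.div_le_div_right (Nat.mul_le_mul_right n hcase)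
          _ = n := Nat.mul_div_cancel_left n hδ0
      have hsδ : 16*d₀*n < s * δ := by
        exact (Nat.div_lt_iff_lt_mul hδ0).mp (by rw [hs]; exact Nat.lt_succ_self _)
      set K : ℕ := c * (s-1) ^ d with hK
      -- trace bound on (s-1)-sets
      have htrace : ∀ S' ∈ powersetCard (s-1) (Finset.univ : Finset (Fin n)),
          (trace F S').card ≤ K := by
        intro S' hS'
        have hcard : S'.card = s - 1 := mem_powersetCard_univ.mp hS'
        have := hπ S' (by omega)
        rw [hcard] at this
        exact this
      -- per-S' inequality
      have hperS' : ∀ S' ∈ powersetCard (s-1) (Finset.univ : Finset (Fin n)),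
          δ * (m - K) ≤ 2 * ∑ a ∈ Finset.univ \ S', ∑ t ∈ trace F S',
            min (wA F S' a t) (wB F S' a t) := by
        intro S' hS'
        have h1 : δ * (m - K) ≤ δ * (m - (trace F S').card) :=
          Nat.mul_le_mul_left _ (Nat.sub_le_sub_left (htrace S' hS') _)
        have hsum : ∑ t ∈ trace F S', (wt F S' t - 1) + (trace F S').card = m := by
          rw [hm, ← sum_wt F S']
          rw [card_eq_sum_ones (trace F S')]
          rw [← sum_add_distrib]
          apply sum_congr rfl
          intro t ht
          have := wt_pos F ht
          omega
        have h2 : δ * (m - (trace F S').card) = ∑ t ∈ trace F S', δ * (wt F S' t - 1) := by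
          rw [← mul_sum]
          congr 1
          omega
        have h3 : ∑ t ∈ trace F S', δ * (wt F S' t - 1)
            ≤ ∑ t ∈ trace F S', 2 * ∑ a ∈ Finset.univ \ S',
              min (wA F S' a t) (wB F S' a t) :=
          sum_le_sum (fun t ht => sep_class F S' δ hsep ht)
        have h4 : ∑ t ∈ trace F S', 2 * ∑ a ∈ Finset.univ \ S', min (wA F S' a t) (wB F S' a t)
            = 2 * ∑ a ∈ Finset.univ \ S', ∑ t ∈ trace F S', min (wA F S' a t) (wB F S' a t) := by
          rw [← mul_sum]
          congr 1
          exact sum_comm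
        omega
      -- global count
      set N' : ℕ := n.choose (s-1) with hN'
      set Ns : ℕ := n.choose s with hNs
      have hglob : N' * (δ * (m - K)) ≤ 2 * (Ns * (4 * d₀ * m)) := by
        have hcard1 : (powersetCard (s-1) (Finset.univ : Finset (Fin n))).card = N' := by
          rw [card_powersetCard, card_univ, Fintype.card_fin]
        have hcard2 : (powersetCard s (Finset.univ : Finset (Fin n))).card = Ns := by
          rw [card_powersetCard, card_univ, Fintype.card_fin]
        calc N' * (δ * (m - K))
            = ∑ _S' ∈ powersetCard (s-1) (Finset.univ : Finset (Fin n)), δ * (m - K) := by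
              rw [sum_const, smul_eq_mul, hcard1]
          _ ≤ ∑ S' ∈ powersetCard (s-1) (Finset.univ : Finset (Fin n)),
              2 * ∑ a ∈ Finset.univ \ S', ∑ t ∈ trace F S', min (wA F S' a t) (wB F S' a t) :=
              sum_le_sum hperS'
          _ = 2 * ∑ S' ∈ powersetCard (s-1) (Finset.univ : Finset (Fin n)),
              ∑ a ∈ Finset.univ \ S', ∑ t ∈ trace F S', min (wA F S' a t) (wB F S' a t) := by
              rw [mul_sum]
          _ = 2 * ∑ S ∈ powersetCard s (Finset.univ : Finset (Fin n)),
              ∑ a ∈ S, ∑ t ∈ trace F (S.erase a), min (wA F (S.erase a) a t) (wB F (S.erase a) a t) := by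
              congr 1
              have := reindex (α := Fin n) s hs1
                (fun S' a => ∑ t ∈ trace F S', min (wA F S' a t) (wB F S' a t))
              exact this
          _ ≤ 2 * ∑ _S ∈ powersetCard s (Finset.univ : Finset (Fin n)), 4 * d₀ * m := by
              apply Nat.mul_le_mul_left
              apply sum_le_sum
              intro S _
              calc ∑ a ∈ S, ∑ t ∈ trace F (S.erase a),
                    min (wA F (S.erase a) a t) (wB F (S.erase a) a t)
                  ≤ ∑ p ∈ eP (trace F S), min (wt F S p.1) (wt F S p.2) := stepB F S
                _ ≤ 4 * d₀ * m := stepA F c d d₀ hπ hd₀ S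
          _ = 2 * (Ns * (4 * d₀ * m)) := by
              rw [sum_const, smul_eq_mul, hcard2]
      -- binomial identity and cancellation
      have hbin : Ns * s = N' * (n - (s-1)) := by
        have := Nat.choose_succ_right_eq n (s-1)
        rw [Nat.sub_add_cancel hs1] at this
        exact this
      have hN'pos : 0 < N' := Nat.choose_pos hs3
      have hcancel1 : δ * (m - K) * s ≤ 8 * d₀ * m * n := by
        have hstep : N' * (δ * (m - K) * s) ≤ N' * (8 * d₀ * m * n) := by
          calc N' * (δ * (m - K) * s) = (N' * (δ * (m - K))) * s := by ring
            _ ≤ (2 * (Ns * (4 * d₀ * m))) * s := Nat.mul_le_mul_right s hglob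
            _ = (Ns * s) * (8 * d₀ * m) := by ring
            _ = (N' * (n - (s-1))) * (8 * d₀ * m) := by rw [hbin]
            _ ≤ (N' * n) * (8 * d₀ * m) := by
                apply Nat.mul_le_mul_right
                apply Nat.mul_le_mul_left
                omega
            _ = N' * (8 * d₀ * m * n) := by ring
        exact Nat.le_of_mul_le_mul_left hstep hN'pos
      have hcancel2 : 2 * (m - K) ≤ m := by
        have hpos : 0 < 8 * d₀ * n := by positivity
        have hstep : (8 * d₀ * n) * (2 * (m - K)) ≤ (8 * d₀ * n) * m := by
          calc (8 * d₀ * n) * (2 * (m - K)) = (16 * d₀ * n) * (m - K) := by ring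
            _ ≤ (s * δ) * (m - K) := Nat.mul_le_mul_right _ (le_of_lt hsδ)
            _ = δ * (m - K) * s := by ring
            _ ≤ 8 * d₀ * m * n := hcancel1
            _ = (8 * d₀ * n) * m := by ring
        exact Nat.le_of_mul_le_mul_left hstep hpos
      have hfin : m ≤ 2 * K := by omega
      rw [hK, hsub1] at hfin
      exact hfin
    · right
      push_neg at hcase
      refine ⟨hcase, ?_⟩
      have := hπ Finset.univ (by rw [card_univ, Fintype.card_fin]; omega)
      have himg : F.image (fun A => A ∩ Finset.univ) = F := by
        apply image_congr (g := id) (fun A _ => by simp) |>.trans image_id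
      rw [himg, card_univ, Fintype.card_fin] at this
      exact this
  -- convert to the real bound
  have hδR : (0:ℝ) < (δ:ℝ) := by exact_mod_cast hδ0
  have hnR : (0:ℝ) ≤ (n:ℝ) := by positivity
  have hratio0 : (0:ℝ) ≤ (n:ℝ)/(δ:ℝ) := by positivity
  rcases key with hmain | ⟨hsmall, hmain⟩
  · have h1 : (m:ℝ) ≤ 2 * c * ((16*d₀*n/δ : ℕ):ℝ) ^ d := by
      have := hmain
      have h2 : ((2 * (c * (16*d₀*n/δ) ^ d) : ℕ):ℝ) = 2 * c * ((16*d₀*n/δ : ℕ):ℝ) ^ d := by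
        push_cast; ring
      calc (m:ℝ) ≤ ((2 * (c * (16*d₀*n/δ) ^ d) : ℕ):ℝ) := by exact_mod_cast hmain
        _ = 2 * c * ((16*d₀*n/δ : ℕ):ℝ) ^ d := h2
    have h3 : ((16*d₀*n/δ : ℕ):ℝ) ≤ (16*d₀:ℝ) * ((n:ℝ)/(δ:ℝ)) := by
      calc ((16*d₀*n/δ : ℕ):ℝ) ≤ ((16*d₀*n : ℕ):ℝ) / ((δ:ℕ):ℝ) := Nat.cast_div_le
        _ = (16*d₀:ℝ) * ((n:ℝ)/(δ:ℝ)) := by push_cast; ring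
    calc (m:ℝ) ≤ 2 * c * ((16*d₀*n/δ : ℕ):ℝ) ^ d := h1
      _ ≤ 2 * c * ((16*d₀:ℝ) * ((n:ℝ)/(δ:ℝ))) ^ d := by
          apply mul_le_mul_of_nonneg_left _ (by positivity)
          exact pow_le_pow_left₀ (by positivity) h3 d
      _ = 2 * c * (16*d₀:ℝ) ^ d * ((n:ℝ)/(δ:ℝ)) ^ d := by rw [mul_pow]; ring
      _ = 2 * ↑c * (16 * ↑d₀ : ℝ) ^ d * ((n : ℝ) / (δ : ℝ)) ^ d := by norm_num
  · have h1 : (m:ℝ) ≤ c * (n:ℝ) ^ d := by exact_mod_cast hmain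
    have h2 : (n:ℝ) ≤ (16*d₀:ℝ) * ((n:ℝ)/(δ:ℝ)) := by
      have hδle : (δ:ℝ) ≤ (16*d₀:ℝ) := by exact_mod_cast le_of_lt hsmall
      calc (n:ℝ) = (δ:ℝ) * ((n:ℝ)/(δ:ℝ)) := by field_simp
        _ ≤ (16*d₀:ℝ) * ((n:ℝ)/(δ:ℝ)) := mul_le_mul_of_nonneg_right hδle hratio0
    calc (m:ℝ) ≤ c * (n:ℝ) ^ d := h1
      _ ≤ c * ((16*d₀:ℝ) * ((n:ℝ)/(δ:ℝ))) ^ d := by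
          apply mul_le_mul_of_nonneg_left _ (by positivity)
          exact pow_le_pow_left₀ hnR h2 d
      _ ≤ 2 * c * ((16*d₀:ℝ) * ((n:ℝ)/(δ:ℝ))) ^ d := by
          apply mul_le_mul_of_nonneg_right _ (by positivity)
          have : (1:ℝ) ≤ 2 := by norm_num
          nlinarith [show (0:ℝ) < c by positivity]
      _ = 2 * c * (16*d₀:ℝ) ^ d * ((n:ℝ)/(δ:ℝ)) ^ d := by rw [mul_pow]; ring
      _ = 2 * ↑c * (16 * ↑d₀ : ℝ) ^ d * ((n : ℝ) / (δ : ℝ)) ^ d := by norm_num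
end

section
/- Let $w : \mathbb{N} \times \mathbb{N} \to \mathbb{R}_{\geq 1}$ satisfy $w(n, p) \leq n^{6n} \cdot w(\lceil p/2 \rceil, \lceil p/2 \rceil)^2$ for all $n \geq 2$ and $p \geq 2$, and $w(n, 1) \leq n^{6n}$ and $w(1, p) \leq 2$. Then there is an absolute constant $C$ such that $w(n, 2n) \leq 2^{C n \log^2 n}$ for all $n \geq 2$. -/
private def f7 : ℕ → ℕ
  | 0 => 1
  | (k+1) => 2 * f7 k + 3 * (k+1)^2

private lemma f7_bound : ∀ k, f7 k + 3*(k^2 + 4*k + 6) ≤ 19 * 2^k := by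
  intro k
  induction k with
  | zero => simp [f7]
  | succ k ih =>
    have h2 : (2:ℕ)^(k+1) = 2 * 2^k := by ring
    simp only [f7, h2]
    nlinarith [ih]

/-- Solving the recurrence `w(n,p) ≤ n^{6n} w(⌈p/2⌉,⌈p/2⌉)²` gives
`w(n,2n) ≤ 2^{C n log² n}`. -/
theorem stmt_7 (w : ℕ → ℕ → ℝ) (hw1 : ∀ n p, 1 ≤ w n p)
    (hrec : ∀ n p : ℕ, 2 ≤ n → 2 ≤ p →
      w n p ≤ (n : ℝ) ^ (6 * n) * (w ((p + 1) / 2) ((p + 1) / 2)) ^ 2)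
    (hbase1 : ∀ n : ℕ, w n 1 ≤ (n : ℝ) ^ (6 * n))
    (hbase2 : ∀ p : ℕ, w 1 p ≤ 2) :
    ∃ C : ℝ, 0 < C ∧ ∀ n : ℕ, 2 ≤ n →
      w n (2 * n) ≤ (2 : ℝ) ^ (C * (n : ℝ) * (Real.logb 2 n) ^ 2) := by
  refine ⟨376, by norm_num, ?_⟩
  have npow : ∀ n : ℕ, 1 ≤ n →
      ((n:ℝ)) ^ (6*n) ≤ (2:ℝ) ^ (6 * n * Nat.clog 2 n) := by
    intro n hn
    have h1 : n ^ (6*n) ≤ (2 ^ (Nat.clog 2 n)) ^ (6*n) :=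
      Nat.pow_le_pow_left (Nat.le_pow_clog one_lt_two n) _
    have h2 : (2 ^ (Nat.clog 2 n)) ^ (6*n) = 2 ^ (6 * n * Nat.clog 2 n) := by
      rw [← pow_mul]; ring_nf
    rw [h2] at h1
    calc ((n:ℝ)) ^ (6*n) = ((n ^ (6*n) : ℕ) : ℝ) := by push_cast; ring
      _ ≤ ((2 ^ (6 * n * Nat.clog 2 n) : ℕ) : ℝ) := by exact_mod_cast h1
      _ = (2:ℝ) ^ (6 * n * Nat.clog 2 n) := by push_cast; ring
  have key : ∀ n : ℕ, 1 ≤ n →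
      w n n ≤ (2:ℝ) ^ (3 * n * Nat.clog 2 n * (Nat.clog 2 n + 1) + f7 (Nat.clog 2 n)) := by
    intro n
    induction n using Nat.strong_induction_on with
    | _ n ih =>
      intro hn
      rcases eq_or_lt_of_le hn with h1 | h2
      · rw [← h1]
        simpa [f7] using hbase2 1
      · have h2' : 2 ≤ n := h2
        set m := (n+1)/2 with hm
        have hm1 : 1 ≤ m := by omega
        have hmn : m < n := by omega
        have h2m : 2 * m ≤ n + 1 := by omega
        set k' := Nat.clog 2 m with hk'
        have hclog : Nat.clog 2 n = k' + 1 := by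
          rw [Nat.clog_of_two_le one_lt_two h2']
          have he : (n + 2 - 1) / 2 = m := by omega
          rw [he]
        have hwm := ih m hmn hm1
        have hr := hrec n n h2' h2'
        rw [← hm] at hr
        set k := Nat.clog 2 n with hk
        have hpos : (0:ℝ) ≤ w m m := le_trans zero_le_one (hw1 m m)
        have hsq : (w m m) ^ 2 ≤ ((2:ℝ) ^ (3 * m * k' * (k' + 1) + f7 k')) ^ 2 :=
          pow_le_pow_left₀ hpos hwm 2
        have step1 : w n n ≤ (2:ℝ) ^ (6 * n * k) *
            ((2:ℝ) ^ (3 * m * k' * (k' + 1) + f7 k')) ^ 2 :=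
          hr.trans (mul_le_mul (npow n hn) hsq (by positivity) (by positivity))
        have step2 : (2:ℝ) ^ (6 * n * k) *
            ((2:ℝ) ^ (3 * m * k' * (k' + 1) + f7 k')) ^ 2
            = (2:ℝ) ^ (6 * n * k + 2 * (3 * m * k' * (k' + 1) + f7 k')) := by
          rw [← pow_mul, ← pow_add]
          congr 1
          ring
        have hexp : 6 * n * k + 2 * (3 * m * k' * (k' + 1) + f7 k')
            ≤ 3 * n * k * (k + 1) + f7 k := by
          rw [hclog]
          have hf : f7 (k'+1) = 2 * f7 k' + 3*(k'+1)^2 := rfl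
          rw [hf]
          have ha : 2*m*(3*(k'*(k'+1))) ≤ (n+1)*(3*(k'*(k'+1))) :=
            Nat.mul_le_mul_right _ h2m
          nlinarith [ha, hn]
        calc w n n ≤ (2:ℝ) ^ (6 * n * k + 2 * (3 * m * k' * (k' + 1) + f7 k')) :=
              step1.trans (le_of_eq step2)
          _ ≤ (2:ℝ) ^ (3 * n * k * (k + 1) + f7 k) :=
              pow_le_pow_right₀ one_le_two hexp
  intro n hn
  set k := Nat.clog 2 n with hk
  have hk1 : 1 ≤ k := Nat.clog_pos one_lt_two hn
  have hn1 : 1 ≤ n := by omega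
  have hdiv : (2 * n + 1) / 2 = n := by omega
  have hr := hrec n (2*n) hn (by omega)
  rw [hdiv] at hr
  have hkey := key n hn1
  have hpos : (0:ℝ) ≤ w n n := le_trans zero_le_one (hw1 n n)
  set E := 3 * n * k * (k + 1) + f7 k with hE
  have hsq : (w n n) ^ 2 ≤ ((2:ℝ) ^ E) ^ 2 := pow_le_pow_left₀ hpos hkey 2
  have step1 : w n (2*n) ≤ (2:ℝ) ^ (6 * n * k + 2 * E) := by
    have heq : (2:ℝ) ^ (6 * n * k) * ((2:ℝ) ^ E) ^ 2
        = (2:ℝ) ^ (6 * n * k + 2 * E) := by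
      rw [← pow_mul, ← pow_add]
      congr 1
      ring
    exact (hr.trans (mul_le_mul (npow n hn1) hsq (by positivity) (by positivity))).trans
      (le_of_eq heq)
  have hf : f7 k ≤ 19 * 2 ^ k := le_trans (Nat.le_add_right _ _) (f7_bound k)
  have hpred : 2 ^ (k - 1) < n := by
    have h := Nat.pow_pred_clog_lt_self one_lt_two (show 1 < n by omega)
    rw [← hk] at h
    simpa [Nat.pred_eq_sub_one] using h
  have h2k : 2 ^ k ≤ 2 * n := by
    have : 2 ^ k = 2 * 2 ^ (k - 1) := by
      conv_lhs => rw [show k = (k-1)+1 by omega]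
      rw [pow_succ]
      ring
    omega
  have e1 : 2 * f7 k ≤ 76 * n := by omega
  have hM : 6 * n * k + 2 * E ≤ 94 * n * k^2 := by
    rw [hE]
    have e3 : k ≤ k*k := Nat.le_mul_of_pos_left k hk1
    have e4 : 1 ≤ k*k := Nat.one_le_iff_ne_zero.mpr (by positivity)
    nlinarith [e1, Nat.mul_le_mul_left n e3, Nat.mul_le_mul_left n e4]
  have hL1 : (1:ℝ) ≤ Real.logb 2 n := by
    have h := Real.logb_le_logb_of_le (by norm_num : (1:ℝ) < 2) (by norm_num : (0:ℝ) < 2)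
      (show (2:ℝ) ≤ (n:ℝ) by exact_mod_cast hn)
    simpa using h
  have hkL : (k : ℝ) ≤ 2 * Real.logb 2 n := by
    have h1' : ((2:ℝ)) ^ (k-1) ≤ (n:ℝ) := by exact_mod_cast hpred.le
    have h2 : Real.logb 2 ((2:ℝ) ^ (k-1)) ≤ Real.logb 2 n :=
      Real.logb_le_logb_of_le (by norm_num) (by positivity) h1'
    rw [Real.logb_pow, Real.logb_self_eq_one (by norm_num)] at h2
    have hcast : ((k - 1 : ℕ) : ℝ) = (k:ℝ) - 1 := by
      rw [Nat.cast_sub hk1]; norm_num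
    rw [hcast] at h2
    linarith
  have hfin : ((6 * n * k + 2 * E : ℕ) : ℝ) ≤ 376 * (n:ℝ) * (Real.logb 2 n)^2 := by
    have h1 : ((6 * n * k + 2 * E : ℕ) : ℝ) ≤ 94 * (n:ℝ) * (k:ℝ)^2 := by
      have := (Nat.cast_le (α := ℝ)).mpr hM
      push_cast at this ⊢
      linarith
    have hk0 : (0:ℝ) ≤ (k:ℝ) := Nat.cast_nonneg k
    have hn0 : (0:ℝ) ≤ (n:ℝ) := Nat.cast_nonneg n
    have h3 : (k:ℝ)^2 ≤ 4 * (Real.logb 2 n)^2 := by nlinarith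
    nlinarith
  calc w n (2*n) ≤ (2:ℝ) ^ (6 * n * k + 2 * E) := step1
    _ = (2:ℝ) ^ (((6 * n * k + 2 * E : ℕ) : ℝ)) := (Real.rpow_natCast 2 _).symm
    _ ≤ (2:ℝ) ^ (376 * (n:ℝ) * (Real.logb 2 n)^2) :=
        Real.rpow_le_rpow_of_exponent_le one_le_two hfin
end

section
/- Let $k \geq 1$ and let $g : \mathbb{N} \times \mathbb{N} \to \mathbb{R}_{\geq 1}$ satisfy $g(n, p) \leq n^{8n + 2kp} \cdot g(\lceil p/2 \rceil, \lceil p/2 \rceil)^2$ for all $n, p \geq 2$, with $g(n,1), g(1,p) \leq n^{8n+2kp}$. Then there is an absolute constant $C$ such that $g(n, 2n) \leq 2^{C k n \log^2 n}$ for all $n \geq 2$. -/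
/-- Solving the recurrence `g(n,p) ≤ n^{8n+2kp} g(⌈p/2⌉,⌈p/2⌉)²` gives
`g(n,2n) ≤ 2^{C k n log² n}`. -/
theorem stmt_8 (k : ℕ) (hk : 1 ≤ k) (g : ℕ → ℕ → ℝ) (hg1 : ∀ n p, 1 ≤ g n p)
    (hrec : ∀ n p : ℕ, 2 ≤ n → 2 ≤ p →
      g n p ≤ (n : ℝ) ^ (8 * n + 2 * k * p) * (g ((p + 1) / 2) ((p + 1) / 2)) ^ 2)
    (hbase1 : ∀ n : ℕ, g n 1 ≤ (n : ℝ) ^ (8 * n + 2 * k))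
    (hbase2 : ∀ p : ℕ, g 1 p ≤ (1 : ℝ) ^ (8 + 2 * k * p)) :
    ∃ C : ℝ, 0 < C ∧ ∀ n : ℕ, 2 ≤ n →
      g n (2 * n) ≤ (2 : ℝ) ^ (C * (k : ℝ) * (n : ℝ) * (Real.logb 2 n) ^ 2) := by
  -- Key lemma: g(p,p) ≤ 2 ^ (20 k p (clog 2 p)^2)
  have key : ∀ p : ℕ, 1 ≤ p → g p p ≤ (2 : ℝ) ^ (20 * k * p * (Nat.clog 2 p) ^ 2) := by
    intro p
    induction p using Nat.strong_induction_on with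
    | _ p IH =>
      intro hp
      rcases eq_or_lt_of_le hp with h1 | h2
      · -- p = 1
        have : g 1 1 ≤ 1 := by simpa using hbase2 1
        rw [← h1]
        simpa [Nat.clog_one_right] using this
      · -- p ≥ 2
        have hp2 : 2 ≤ p := h2
        set q := (p + 1) / 2 with hq_def
        have hq1 : 1 ≤ q := by omega
        have hqp : q < p := by omega
        set c := Nat.clog 2 p with hc_def
        have hc1 : 1 ≤ c := Nat.clog_pos one_lt_two hp2
        have hcq : Nat.clog 2 q = c - 1 := by
          have h := Nat.clog_of_two_le one_lt_two hp2
          have he : (p + 2 - 1) / 2 = q := by omega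
          rw [he] at h
          omega
        -- c ≤ p
        have hcp : c ≤ p := by
          have h1 : 2 ^ (c - 1) < p := by
            simpa [hc_def] using Nat.pow_pred_clog_lt_self one_lt_two h2
          have h2' : c - 1 < 2 ^ (c - 1) := Nat.lt_two_pow_self
          omega
        have hgq := IH q hqp hq1
        have hgq2 : (g q q) ^ 2 ≤ (2 : ℝ) ^ (40 * k * q * (c - 1) ^ 2) := by
          have h0 : (0 : ℝ) ≤ g q q := le_trans zero_le_one (hg1 q q)
          calc (g q q) ^ 2 ≤ ((2 : ℝ) ^ (20 * k * q * (Nat.clog 2 q) ^ 2)) ^ 2 := by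
                exact pow_le_pow_left₀ h0 hgq 2
            _ = (2 : ℝ) ^ (40 * k * q * (c - 1) ^ 2) := by
                rw [← pow_mul, hcq]; ring_nf
        have hple : (p : ℝ) ^ (8 * p + 2 * k * p) ≤ (2 : ℝ) ^ (10 * k * p * c) := by
          have hp2c : (p : ℝ) ≤ (2 : ℝ) ^ c := by
            have := Nat.le_pow_clog one_lt_two p
            exact_mod_cast this
          have h0 : (0 : ℝ) ≤ (p : ℝ) := Nat.cast_nonneg p
          calc (p : ℝ) ^ (8 * p + 2 * k * p) ≤ ((2 : ℝ) ^ c) ^ (8 * p + 2 * k * p) :=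
                pow_le_pow_left₀ h0 hp2c _
            _ = (2 : ℝ) ^ (c * (8 * p + 2 * k * p)) := by rw [← pow_mul]
            _ ≤ (2 : ℝ) ^ (10 * k * p * c) := by
                apply pow_le_pow_right₀ one_le_two
                have h8 : 8 * p + 2 * k * p ≤ 10 * k * p := by nlinarith
                calc c * (8 * p + 2 * k * p) ≤ c * (10 * k * p) := Nat.mul_le_mul_left c h8
                  _ = 10 * k * p * c := by ring
        calc g p p ≤ (p : ℝ) ^ (8 * p + 2 * k * p) * (g q q) ^ 2 := hrec p p hp2 hp2
          _ ≤ (2 : ℝ) ^ (10 * k * p * c) * (2 : ℝ) ^ (40 * k * q * (c - 1) ^ 2) := by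
              apply mul_le_mul hple hgq2 (by positivity)
              positivity
          _ = (2 : ℝ) ^ (10 * k * p * c + 40 * k * q * (c - 1) ^ 2) := by rw [← pow_add]
          _ ≤ (2 : ℝ) ^ (20 * k * p * c ^ 2) := by
              apply pow_le_pow_right₀ one_le_two
              have h2q : 2 * q ≤ p + 1 := by omega
              have key_ineq : 10 * p * c + 20 * (p + 1) * (c - 1) ^ 2 ≤ 20 * p * c ^ 2 := by
                obtain ⟨d, hd⟩ : ∃ d, c = d + 1 := ⟨c - 1, by omega⟩
                have hdp : d < p := by omega
                rw [hd]
                simp only [Nat.add_sub_cancel]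
                nlinarith [hdp, hp2]
              have hqq : 40 * k * q * (c - 1) ^ 2 ≤ 20 * k * (p + 1) * (c - 1) ^ 2 := by
                apply Nat.mul_le_mul_right
                calc 40 * k * q = 20 * k * (2 * q) := by ring
                  _ ≤ 20 * k * (p + 1) := Nat.mul_le_mul_left _ h2q
              calc 10 * k * p * c + 40 * k * q * (c - 1) ^ 2
                  ≤ 10 * k * p * c + 20 * k * (p + 1) * (c - 1) ^ 2 := Nat.add_le_add_left hqq _
                _ = k * (10 * p * c + 20 * (p + 1) * (c - 1) ^ 2) := by ring
                _ ≤ k * (20 * p * c ^ 2) := Nat.mul_le_mul_left k key_ineq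
                _ = 20 * k * p * c ^ 2 := by ring
  -- Now the main bound
  refine ⟨208, by norm_num, fun n hn => ?_⟩
  set c := Nat.clog 2 n with hc_def
  have hc1 : 1 ≤ c := Nat.clog_pos one_lt_two hn
  have hq : (2 * n + 1) / 2 = n := by omega
  have hgn := key n (by omega)
  have hgn2 : (g n n) ^ 2 ≤ (2 : ℝ) ^ (40 * k * n * c ^ 2) := by
    have h0 : (0 : ℝ) ≤ g n n := le_trans zero_le_one (hg1 n n)
    calc (g n n) ^ 2 ≤ ((2 : ℝ) ^ (20 * k * n * c ^ 2)) ^ 2 := pow_le_pow_left₀ h0 hgn 2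
      _ = (2 : ℝ) ^ (40 * k * n * c ^ 2) := by rw [← pow_mul]; ring_nf
  have hple : (n : ℝ) ^ (8 * n + 2 * k * (2 * n)) ≤ (2 : ℝ) ^ (12 * k * n * c) := by
    have hn2c : (n : ℝ) ≤ (2 : ℝ) ^ c := by
      have := Nat.le_pow_clog one_lt_two n
      exact_mod_cast this
    calc (n : ℝ) ^ (8 * n + 2 * k * (2 * n)) ≤ ((2 : ℝ) ^ c) ^ (8 * n + 2 * k * (2 * n)) :=
          pow_le_pow_left₀ (Nat.cast_nonneg n) hn2c _
      _ = (2 : ℝ) ^ (c * (8 * n + 2 * k * (2 * n))) := by rw [← pow_mul]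
      _ ≤ (2 : ℝ) ^ (12 * k * n * c) := by
          apply pow_le_pow_right₀ one_le_two
          have h8 : 8 * n + 2 * k * (2 * n) ≤ 12 * k * n := by nlinarith
          calc c * (8 * n + 2 * k * (2 * n)) ≤ c * (12 * k * n) := Nat.mul_le_mul_left c h8
            _ = 12 * k * n * c := by ring
  have hnat : g n (2 * n) ≤ (2 : ℝ) ^ (52 * k * n * c ^ 2) := by
    calc g n (2 * n) ≤ (n : ℝ) ^ (8 * n + 2 * k * (2 * n)) *
          (g ((2 * n + 1) / 2) ((2 * n + 1) / 2)) ^ 2 := hrec n (2 * n) hn (by omega)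
      _ = (n : ℝ) ^ (8 * n + 2 * k * (2 * n)) * (g n n) ^ 2 := by rw [hq]
      _ ≤ (2 : ℝ) ^ (12 * k * n * c) * (2 : ℝ) ^ (40 * k * n * c ^ 2) := by
          apply mul_le_mul hple hgn2 (by positivity)
          positivity
      _ = (2 : ℝ) ^ (12 * k * n * c + 40 * k * n * c ^ 2) := by rw [← pow_add]
      _ ≤ (2 : ℝ) ^ (52 * k * n * c ^ 2) := by
          apply pow_le_pow_right₀ one_le_two
          have hcc : c ≤ c ^ 2 := Nat.le_self_pow two_ne_zero c
          calc 12 * k * n * c + 40 * k * n * c ^ 2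
              ≤ 12 * k * n * c ^ 2 + 40 * k * n * c ^ 2 :=
                Nat.add_le_add_right (Nat.mul_le_mul_left _ hcc) _
            _ = 52 * k * n * c ^ 2 := by ring
  -- convert to rpow
  have hlogb1 : (1 : ℝ) ≤ Real.logb 2 n := by
    rw [Real.le_logb_iff_rpow_le one_lt_two (by positivity)]
    simpa using (show (2:ℝ) ≤ (n:ℝ) by exact_mod_cast hn)
  have hclogb : (c : ℝ) ≤ 2 * Real.logb 2 n := by
    have h1 : (2 : ℕ) ^ (c - 1) < n := Nat.pow_pred_clog_lt_self one_lt_two hn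
    have h2 : ((2 : ℝ)) ^ ((c : ℝ) - 1) ≤ (n : ℝ) := by
      have hcast : ((2 : ℕ) ^ (c - 1) : ℝ) ≤ (n : ℝ) := by exact_mod_cast h1.le
      have : ((2 : ℝ)) ^ ((c : ℝ) - 1) = ((2 : ℕ) ^ (c - 1) : ℝ) := by
        push_cast
        rw [show ((c : ℝ) - 1) = ((c - 1 : ℕ) : ℝ) by
          have : 1 ≤ c := hc1; push_cast [Nat.cast_sub this]; ring]
        rw [Real.rpow_natCast]
      rw [this]; exact hcast
    have h3 : (c : ℝ) - 1 ≤ Real.logb 2 n := by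
      rw [Real.le_logb_iff_rpow_le one_lt_two (by positivity : (0:ℝ) < (n:ℝ))]
      exact h2
    linarith
  calc g n (2 * n) ≤ (2 : ℝ) ^ (52 * k * n * c ^ 2) := hnat
    _ = (2 : ℝ) ^ ((52 * k * n * c ^ 2 : ℕ) : ℝ) := by rw [Real.rpow_natCast]
    _ ≤ (2 : ℝ) ^ (208 * (k : ℝ) * (n : ℝ) * (Real.logb 2 n) ^ 2) := by
        apply Real.rpow_le_rpow_of_exponent_le one_le_two
        push_cast
        have hc0 : (0 : ℝ) ≤ (c : ℝ) := Nat.cast_nonneg c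
        have hk0 : (1 : ℝ) ≤ (k : ℝ) := by exact_mod_cast hk
        have hn0 : (2 : ℝ) ≤ (n : ℝ) := by exact_mod_cast hn
        have h4 : (c : ℝ) ^ 2 ≤ 4 * (Real.logb 2 n) ^ 2 := by
          nlinarith [pow_le_pow_left₀ hc0 hclogb 2]
        nlinarith [mul_le_mul_of_nonneg_left h4
          (show (0 : ℝ) ≤ 52 * (k : ℝ) * (n : ℝ) by positivity)]
end
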